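/- Suppose g : [0,κ] → ℝ is twice continuously differentiable, g(0) = 0, and for every δ ∈ (0,1) there exist a > 0, α ≥ 0, β ≥ 0 with α + β > 0 such that for all θ ∈ (0,δ] and v ∈ [0,κ], (1 − θ) g(v) − g((1 − θ) v) ≤ − a θ κ^α v^β. Then g'(v) · v ≤ g(v) − a κ^α v^β for all v ∈ [0,κ]; in particular g'(v) < g(v)/v for all v ∈ (0,κ]. -/

import Mathlib

open Real Set

/-- Auxiliary: one-sided derivative sign from nonpositivity. -/
lemma aux_deriv_nonpos {F : ℝ → ℝ} {D δ : ℝ} (hδ : 0 < δ)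
    (hF : HasDerivWithinAt F D (Set.Icc 0 δ) 0) (h0 : F 0 = 0)
    (hle : ∀ θ ∈ Set.Ioc (0 : ℝ) δ, F θ ≤ 0) : D ≤ 0 := by
  rw [hasDerivWithinAt_iff_tendsto_slope] at hF
  have hs : Set.Icc (0 : ℝ) δ \ {0} = Set.Ioc 0 δ := by
    ext x
    simp only [Set.mem_diff, Set.mem_Icc, Set.mem_singleton_iff, Set.mem_Ioc]
    constructor
    · rintro ⟨⟨h1, h2⟩, h3⟩; exact ⟨lt_of_le_of_ne h1 (Ne.symm h3), h2⟩
    · rintro ⟨h1, h2⟩; exact ⟨⟨h1.le, h2⟩, h1.ne'⟩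
  rw [hs] at hF
  have hne : (nhdsWithin (0 : ℝ) (Set.Ioc 0 δ)).NeBot := by
    rw [nhdsWithin_Ioc_eq_nhdsGT hδ]
    infer_instance
  refine le_of_tendsto hF ?_
  filter_upwards [self_mem_nhdsWithin] with x hx
  rw [slope_def_field]
  simp only [h0, sub_zero]
  exact div_nonpos_of_nonpos_of_nonneg (hle x hx) hx.1.le

/-- Condition (A3) implies g'(v)·v ≤ g(v) − aκ^α v^β on [0,κ],
and in particular g'(v) < g(v)/v on (0,κ]. -/
theorem stmt_2 (κ : ℝ) (hκ : 0 < κ) (g : ℝ → ℝ)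
    (hg : ContDiffOn ℝ 2 g (Set.Icc 0 κ)) (hg0 : g 0 = 0)
    (hA3 : ∀ δ ∈ Set.Ioo (0 : ℝ) 1, ∃ a > (0 : ℝ), ∃ α ≥ (0 : ℝ), ∃ β ≥ (0 : ℝ),
      0 < α + β ∧ ∀ θ ∈ Set.Ioc (0 : ℝ) δ, ∀ v ∈ Set.Icc (0 : ℝ) κ,
        (1 - θ) * g v - g ((1 - θ) * v) ≤ -(a * θ * κ ^ α * v ^ β)) :
    (∃ a > (0 : ℝ), ∃ α ≥ (0 : ℝ), ∃ β ≥ (0 : ℝ), 0 < α + β ∧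
      ∀ v ∈ Set.Icc (0 : ℝ) κ,
        derivWithin g (Set.Icc 0 κ) v * v ≤ g v - a * κ ^ α * v ^ β) ∧
    (∀ v ∈ Set.Ioc (0 : ℝ) κ, derivWithin g (Set.Icc 0 κ) v < g v / v) := by
  obtain ⟨a, ha, α, hα, β, hβ, hαβ, hkey⟩ :=
    hA3 (1/2) (by norm_num)
  have hmain : ∀ v ∈ Set.Icc (0 : ℝ) κ,
      derivWithin g (Set.Icc 0 κ) v * v ≤ g v - a * κ ^ α * v ^ β := by
    intro v hv
    set g' := derivWithin g (Set.Icc 0 κ) v with hg'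
    have hgd : HasDerivWithinAt g g' (Set.Icc 0 κ) v :=
      ((hg.differentiableOn two_ne_zero) v hv).hasDerivWithinAt
    set F : ℝ → ℝ := fun θ => (1 - θ) * g v - g ((1 - θ) * v) + a * θ * κ ^ α * v ^ β with hF
    -- derivative of F at 0 within Icc 0 (1/2)
    have hmaps : Set.MapsTo (fun θ : ℝ => (1 - θ) * v) (Set.Icc 0 (1/2)) (Set.Icc 0 κ) := by
      intro θ hθ
      constructor
      · have : (0:ℝ) ≤ 1 - θ := by linarith [hθ.2]
        exact mul_nonneg this hv.1
      · calc (1 - θ) * v ≤ 1 * v := by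
              apply mul_le_mul_of_nonneg_right _ hv.1; linarith [hθ.1]
          _ = v := one_mul v
          _ ≤ κ := hv.2
    have hφ : HasDerivWithinAt (fun θ : ℝ => (1 - θ) * v) (-v) (Set.Icc 0 (1/2)) 0 := by
      have : HasDerivAt (fun θ : ℝ => (1 - θ) * v) ((-1) * v) 0 :=
        (((hasDerivAt_id (0:ℝ)).const_sub 1)).mul_const v
      simpa using this.hasDerivWithinAt
    have hgd' : HasDerivWithinAt g g' (Set.Icc 0 κ) ((fun θ : ℝ => (1 - θ) * v) 0) := by
      simpa using hgd
    have hcomp : HasDerivWithinAt (fun θ : ℝ => g ((1 - θ) * v)) (g' * (-v))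
        (Set.Icc 0 (1/2)) 0 := hgd'.comp 0 hφ hmaps
    have h1 : HasDerivWithinAt (fun θ : ℝ => (1 - θ) * g v) (-(g v)) (Set.Icc 0 (1/2)) 0 := by
      have : HasDerivAt (fun θ : ℝ => (1 - θ) * g v) ((-1) * g v) 0 :=
        (((hasDerivAt_id (0:ℝ)).const_sub 1)).mul_const (g v)
      simpa using this.hasDerivWithinAt
    have h3 : HasDerivWithinAt (fun θ : ℝ => a * θ * κ ^ α * v ^ β)
        (a * κ ^ α * v ^ β) (Set.Icc 0 (1/2)) 0 := by
      have : HasDerivAt (fun θ : ℝ => a * θ * κ ^ α * v ^ β) (a * κ ^ α * v ^ β) 0 := by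
        have h := ((hasDerivAt_id (0:ℝ)).const_mul a).mul_const (κ ^ α)
        have h2 := h.mul_const (v ^ β)
        simpa [mul_comm, mul_assoc, mul_left_comm] using h2
      exact this.hasDerivWithinAt
    have hFd : HasDerivWithinAt F (-(g v) - g' * (-v) + a * κ ^ α * v ^ β)
        (Set.Icc 0 (1/2)) 0 := (h1.sub hcomp).add h3
    have hF0 : F 0 = 0 := by simp [hF]
    have hFle : ∀ θ ∈ Set.Ioc (0 : ℝ) (1/2), F θ ≤ 0 := by
      intro θ hθ
      have := hkey θ hθ v hv
      simp only [hF]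
      linarith
    have hD := aux_deriv_nonpos (by norm_num) hFd hF0 hFle
    have : -(g v) + g' * v + a * κ ^ α * v ^ β ≤ 0 := by linarith [hD]; 
    linarith
  refine ⟨⟨a, ha, α, hα, β, hβ, hαβ, hmain⟩, ?_⟩
  intro v hv
  have h := hmain v ⟨hv.1.le, hv.2⟩
  have hpos : 0 < a * κ ^ α * v ^ β :=
    mul_pos (mul_pos ha (Real.rpow_pos_of_pos hκ α)) (Real.rpow_pos_of_pos hv.1 β)
  rw [lt_div_iff₀ hv.1]
  linarith
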